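/- The half-braiding morphisms e_{a, F_A(v)} : a ⊗ F_A(v) → F_A(v) ⊗ a (defined as the mate of (η_v ⊗ j_a) ≫ (−⊗_A−)) are natural in V-morphisms: for every f : u → v in V, the square a ⊗ F_A(u) → a ⊗ F_A(v) → F_A(v) ⊗ a equals a ⊗ F_A(u) → F_A(u) ⊗ a → F_A(v) ⊗ a, i.e., one may slide F_A(f) under the half-braiding. Consequently F_A lifts to a functor F_A^Z : V → Z(A^V) into the Drinfeld center. -/

import Mathlib

open CategoryTheory MonoidalCategory

universe w w' v u

variable (V : Type u) [Category.{v} V] [MonoidalCategory V] [BraidedCategory V]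

/-- A (strict) monoidal structure on a `V`-enriched category: the data and axioms of a
`V`-monoidal category over the braided monoidal category `V`. -/
structure VMonStruct (C : Type w) [EnrichedCategory V C] where
  tUnit : C
  tObj : C → C → C
  tHom : ∀ a b c d : C, ((a ⟶[V] c) ⊗ (b ⟶[V] d)) ⟶ ((tObj a b) ⟶[V] (tObj c d))
  unit_tensor : ∀ a, tObj tUnit a = a
  tensor_unit : ∀ a, tObj a tUnit = a
  tensor_assoc : ∀ a b c, tObj (tObj a b) c = tObj a (tObj b c)
  left_unitality : ∀ a b : C,
    (λ_ (a ⟶[V] b)).inv ≫ (eId V tUnit ⊗ₘ 𝟙 (a ⟶[V] b)) ≫ tHom tUnit a tUnit b =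
      eqToHom (by rw [unit_tensor, unit_tensor])
  right_unitality : ∀ a b : C,
    (ρ_ (a ⟶[V] b)).inv ≫ (𝟙 (a ⟶[V] b) ⊗ₘ eId V tUnit) ≫ tHom a tUnit b tUnit =
      eqToHom (by rw [tensor_unit, tensor_unit])
  tHom_assoc : ∀ a b c d e f : C,
    (tHom a b d e ⊗ₘ 𝟙 (c ⟶[V] f)) ≫ tHom (tObj a b) c (tObj d e) f =
      (α_ (a ⟶[V] d) (b ⟶[V] e) (c ⟶[V] f)).hom ≫
        ((a ⟶[V] d) ◁ tHom b c e f) ≫ tHom a (tObj b c) d (tObj e f) ≫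
        eqToHom (by rw [tensor_assoc a b c, tensor_assoc d e f])
  braided_interchange : ∀ a b c d e f : C,
    (tHom a d b e ⊗ₘ tHom b e c f) ≫ eComp V (tObj a d) (tObj b e) (tObj c f) =
      (α_ (a ⟶[V] b) (d ⟶[V] e) ((b ⟶[V] c) ⊗ (e ⟶[V] f))).hom ≫
        ((a ⟶[V] b) ◁ (α_ (d ⟶[V] e) (b ⟶[V] c) (e ⟶[V] f)).inv) ≫
        ((a ⟶[V] b) ◁ ((β_ (d ⟶[V] e) (b ⟶[V] c)).hom ▷ (e ⟶[V] f))) ≫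
        ((a ⟶[V] b) ◁ (α_ (b ⟶[V] c) (d ⟶[V] e) (e ⟶[V] f)).hom) ≫
        (α_ (a ⟶[V] b) (b ⟶[V] c) ((d ⟶[V] e) ⊗ (e ⟶[V] f))).inv ≫
        (eComp V a b c ⊗ₘ eComp V d e f) ≫ tHom a d c f

variable {V}

section Underlying

variable {C : Type w} [EnrichedCategory V C]

/-- Composition of `𝟙_V`-graded morphisms in the underlying category. -/
def compU {a b c : C} (f : 𝟙_ V ⟶ (a ⟶[V] b)) (g : 𝟙_ V ⟶ (b ⟶[V] c)) :
    𝟙_ V ⟶ (a ⟶[V] c) :=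
  (λ_ (𝟙_ V)).inv ≫ (f ⊗ₘ g) ≫ eComp V a b c

/-- Identity `𝟙_V`-graded morphism. -/
def idU (a : C) : 𝟙_ V ⟶ (a ⟶[V] a) := eId V a

/-- The `𝟙_V`-graded morphism induced by an equality of objects. -/
def eqU {a b : C} (h : a = b) : 𝟙_ V ⟶ (a ⟶[V] b) := by
  subst h; exact idU a

/-- Tensor product of `𝟙_V`-graded morphisms in the underlying category. -/
def tU (M : VMonStruct V C) {a b c d : C}
    (f : 𝟙_ V ⟶ (a ⟶[V] c)) (g : 𝟙_ V ⟶ (b ⟶[V] d)) :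
    𝟙_ V ⟶ (M.tObj a b ⟶[V] M.tObj c d) :=
  (λ_ (𝟙_ V)).inv ≫ (f ⊗ₘ g) ≫ M.tHom a b c d

/-- The free module functor data: a left adjoint `F` of `x ↦ C(1_C → x)` together with the
main adjunction `C^V(a ⊗ F(v) → b) ≅ V(v → C(a → b))`. -/
structure FreeModule (M : VMonStruct V C) where
  F : V → C
  Fmap : ∀ {u v : V}, (u ⟶ v) → (𝟙_ V ⟶ (F u ⟶[V] F v))
  Fmap_id : ∀ v : V, Fmap (𝟙 v) = idU (F v)
  Fmap_comp : ∀ {u v w : V} (f : u ⟶ v) (g : v ⟶ w), Fmap (f ≫ g) = compU (Fmap f) (Fmap g)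
  adj : ∀ (v : V) (a b : C), (𝟙_ V ⟶ (M.tObj a (F v) ⟶[V] b)) ≃ (v ⟶ (a ⟶[V] b))
  adj_nat_right : ∀ (v : V) (a b b' : C) (x : 𝟙_ V ⟶ (M.tObj a (F v) ⟶[V] b))
      (g : 𝟙_ V ⟶ (b ⟶[V] b')),
    adj v a b' (compU x g) =
      adj v a b x ≫ (ρ_ (a ⟶[V] b)).inv ≫ ((a ⟶[V] b) ◁ g) ≫ eComp V a b b'
  adj_nat_left : ∀ {u v : V} (h : u ⟶ v) (a b : C)
      (x : 𝟙_ V ⟶ (M.tObj a (F v) ⟶[V] b)),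
    adj u a b (compU (tU M (idU a) (Fmap h)) x) = h ≫ adj v a b x

/-- The unit of the main adjunction. -/
def unitU {M : VMonStruct V C} (FM : FreeModule M) (v : V) :
    v ⟶ (M.tUnit ⟶[V] FM.F v) :=
  FM.adj v M.tUnit (FM.F v) (eqU (M.unit_tensor (FM.F v)))

/-- The counit of the main adjunction. -/
def counitU {M : VMonStruct V C} (FM : FreeModule M) (a b : C) :
    𝟙_ V ⟶ (M.tObj a (FM.F (a ⟶[V] b)) ⟶[V] b) :=
  (FM.adj (a ⟶[V] b) a b).symm (𝟙 (a ⟶[V] b))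

/-- The half-braiding `e_{a, F(v)}`, the mate of `(η_v ⊗ j_a) ≫ (−⊗−)`. -/
def hb {M : VMonStruct V C} (FM : FreeModule M) (a : C) (v : V) :
    𝟙_ V ⟶ (M.tObj a (FM.F v) ⟶[V] M.tObj (FM.F v) a) :=
  (FM.adj v a (M.tObj (FM.F v) a)).symm
    ((ρ_ v).inv ≫ (unitU FM v ⊗ₘ eId V a) ≫ M.tHom M.tUnit a (FM.F v) a ≫
      eqToHom (by rw [M.unit_tensor]))

end Underlying

section Aux

variable {C : Type w} [EnrichedCategory V C]

lemma compU_idU {a b : C} (x : 𝟙_ V ⟶ (a ⟶[V] b)) : compU x (idU b) = x := by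
  simp [compU, idU, MonoidalCategory.tensorHom_def, ← unitors_equal]

lemma idU_compU {a b : C} (x : 𝟙_ V ⟶ (a ⟶[V] b)) : compU (idU a) x = x := by
  simp [compU, idU, tensorHom_def', ← unitors_equal]

lemma eqU_rfl (a : C) : (eqU (rfl : a = a) : 𝟙_ V ⟶ (a ⟶[V] a)) = idU a := rfl

lemma compU_eqU {a b c : C} (x : 𝟙_ V ⟶ (a ⟶[V] b)) (h : b = c) :
    compU x (eqU h) = x ≫ eqToHom (by rw [h]) := by
  subst h; rw [eqU_rfl, compU_idU, eqToHom_refl, Category.comp_id]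

lemma eqU_compU {a b c : C} (h : a = b) (x : 𝟙_ V ⟶ (b ⟶[V] c)) :
    compU (eqU h) x = x ≫ eqToHom (by rw [h]) := by
  subst h; rw [eqU_rfl, idU_compU, eqToHom_refl, Category.comp_id]

lemma tU_idU_left (M : VMonStruct V C) {b c : C} (x : 𝟙_ V ⟶ (b ⟶[V] c)) :
    tU M (idU M.tUnit) x = x ≫ eqToHom (by rw [M.unit_tensor, M.unit_tensor]) := by
  have h : (λ_ (𝟙_ V)).inv ≫ (eId V M.tUnit ⊗ₘ x) =
      x ≫ (λ_ (b ⟶[V] c)).inv ≫ (eId V M.tUnit ⊗ₘ 𝟙 (b ⟶[V] c)) := by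
    simp [tensorHom_def', ← unitors_equal]
  rw [tU, idU, ← Category.assoc, h]
  simp only [Category.assoc]
  rw [M.left_unitality]

lemma eqToHom_comp_e {a a' b c : C} (h : a = a') (g : 𝟙_ V ⟶ (b ⟶[V] c)) :
    eqToHom (show (a ⟶[V] b) = (a' ⟶[V] b) by rw [h]) ≫ (ρ_ _).inv ≫ (_ ◁ g) ≫
        eComp V a' b c =
      ((ρ_ _).inv ≫ (_ ◁ g) ≫ eComp V a b c) ≫
        eqToHom (show (a ⟶[V] c) = (a' ⟶[V] c) by rw [h]) := by
  subst h; simp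

set_option maxHeartbeats 1000000 in
lemma key_interchange (M : VMonStruct V C) (p q r a : C) {X : V}
    (s : X ⟶ (p ⟶[V] q)) (m : 𝟙_ V ⟶ (q ⟶[V] r)) :
    ((s ≫ (ρ_ _).inv ≫ (_ ◁ m) ≫ eComp V p q r) ⊗ₘ eId V a) ≫ M.tHom p a r a =
      (s ⊗ₘ eId V a) ≫ M.tHom p a q a ≫ (ρ_ _).inv ≫
        (_ ◁ ((λ_ (𝟙_ V)).inv ≫ (m ⊗ₘ eId V a) ≫ M.tHom q a r a)) ≫
        eComp V (M.tObj p a) (M.tObj q a) (M.tObj r a) := by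
  have hbb : (β_ (𝟙_ V) (𝟙_ V)).hom = 𝟙 _ := by
    rw [← cancel_mono (ρ_ (𝟙_ V)).hom, braiding_rightUnitor, unitors_equal, Category.id_comp]
  have h1 : ((λ_ (𝟙_ V)).inv ≫ (eId V a ⊗ₘ eId V a)) ≫ eComp V a a a = eId V a := by
    simp [tensorHom_def', ← unitors_equal]
  set e : 𝟙_ V ⟶ ((a ⟶[V] a) ⊗ ((q ⟶[V] r) ⊗ (a ⟶[V] a))) :=
    (λ_ (𝟙_ V)).inv ≫ (eId V a ⊗ₘ ((λ_ (𝟙_ V)).inv ≫ (m ⊗ₘ eId V a))) with he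
  set e' : 𝟙_ V ⟶ ((q ⟶[V] r) ⊗ ((a ⟶[V] a) ⊗ (a ⟶[V] a))) :=
    (λ_ (𝟙_ V)).inv ≫ (m ⊗ₘ ((λ_ (𝟙_ V)).inv ≫ (eId V a ⊗ₘ eId V a))) with he'
  have h2 : e ≫ (α_ ((a:C) ⟶[V] a) (q ⟶[V] r) (a ⟶[V] a)).inv ≫
      ((β_ ((a:C) ⟶[V] a) (q ⟶[V] r)).hom ▷ (a ⟶[V] a)) ≫
      (α_ ((q:C) ⟶[V] r) (a ⟶[V] a) (a ⟶[V] a)).hom = e' := by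
    have hsw : ((λ_ (𝟙_ V)).inv ≫ (eId V a ⊗ₘ m)) ≫ (β_ ((a:C) ⟶[V] a) (q ⟶[V] r)).hom =
        (λ_ (𝟙_ V)).inv ≫ (m ⊗ₘ eId V a) := by
      rw [Category.assoc, BraidedCategory.braiding_naturality, hbb, Category.id_comp]
    have hA : e ≫ (α_ ((a:C) ⟶[V] a) (q ⟶[V] r) (a ⟶[V] a)).inv =
        (λ_ (𝟙_ V)).inv ≫ (((λ_ (𝟙_ V)).inv ≫ (eId V a ⊗ₘ m)) ⊗ₘ eId V a) := by
      rw [he]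
      simp only [MonoidalCategory.tensorHom_def, Category.assoc, MonoidalCategory.whiskerLeft_comp,
        comp_whiskerRight, whisker_exchange_assoc, whisker_exchange]
      coherence
    have hB : (λ_ (𝟙_ V)).inv ≫ (((λ_ (𝟙_ V)).inv ≫ (m ⊗ₘ eId V a)) ⊗ₘ eId V a) ≫
        (α_ ((q:C) ⟶[V] r) (a ⟶[V] a) (a ⟶[V] a)).hom = e' := by
      rw [he']
      simp only [MonoidalCategory.tensorHom_def, Category.assoc, MonoidalCategory.whiskerLeft_comp,
        comp_whiskerRight, whisker_exchange_assoc, whisker_exchange]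
      coherence
    rw [← Category.assoc e, hA, Category.assoc, ← tensorHom_id, tensorHom_comp_tensorHom_assoc,
      Category.comp_id, hsw, hB]
  have h3 : ((ρ_ (X ⊗ 𝟙_ V)).inv ≫ ((s ⊗ₘ eId V a) ⊗ₘ ((λ_ (𝟙_ V)).inv ≫ (m ⊗ₘ eId V a)))) ≫
      (α_ (p ⟶[V] q) (a ⟶[V] a) ((q ⟶[V] r) ⊗ (a ⟶[V] a))).hom =
      (s ▷ 𝟙_ V) ≫ ((p ⟶[V] q) ◁ e) := by
    rw [he]
    simp only [MonoidalCategory.tensorHom_def, Category.assoc, MonoidalCategory.whiskerLeft_comp,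
      comp_whiskerRight, whisker_exchange_assoc, whisker_exchange]
    coherence
  have h4 : (s ▷ 𝟙_ V) ≫ ((p ⟶[V] q) ◁ e') ≫
      (α_ (p ⟶[V] q) (q ⟶[V] r) ((a ⟶[V] a) ⊗ (a ⟶[V] a))).inv ≫
      (eComp V p q r ⊗ₘ eComp V a a a) ≫ M.tHom p a r a =
      ((s ≫ (ρ_ _).inv ≫ (_ ◁ m) ≫ eComp V p q r) ⊗ₘ eId V a) ≫ M.tHom p a r a := by
    have hC : (s ▷ 𝟙_ V) ≫ ((p ⟶[V] q) ◁ e') ≫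
        (α_ (p ⟶[V] q) (q ⟶[V] r) ((a ⟶[V] a) ⊗ (a ⟶[V] a))).inv =
        ((s ≫ (ρ_ _).inv ≫ (_ ◁ m)) ⊗ₘ ((λ_ (𝟙_ V)).inv ≫ (eId V a ⊗ₘ eId V a))) := by
      rw [he']
      simp only [MonoidalCategory.tensorHom_def, Category.assoc, MonoidalCategory.whiskerLeft_comp,
        comp_whiskerRight, whisker_exchange_assoc, whisker_exchange]
      coherence
    rw [reassoc_of% hC, tensorHom_comp_tensorHom_assoc, h1]
    simp only [Category.assoc]
  have hAcl : (s ⊗ₘ eId V a) ≫ M.tHom p a q a ≫ (ρ_ _).inv ≫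
      (_ ◁ ((λ_ (𝟙_ V)).inv ≫ (m ⊗ₘ eId V a) ≫ M.tHom q a r a)) ≫
      eComp V (M.tObj p a) (M.tObj q a) (M.tObj r a) =
      ((ρ_ (X ⊗ 𝟙_ V)).inv ≫ ((s ⊗ₘ eId V a) ⊗ₘ ((λ_ (𝟙_ V)).inv ≫ (m ⊗ₘ eId V a)))) ≫
        (M.tHom p a q a ⊗ₘ M.tHom q a r a) ≫
        eComp V (M.tObj p a) (M.tObj q a) (M.tObj r a) := by
    simp only [MonoidalCategory.tensorHom_def, Category.assoc, MonoidalCategory.whiskerLeft_comp,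
      comp_whiskerRight, whisker_exchange_assoc, whisker_exchange]
    coherence
  rw [hAcl, M.braided_interchange]
  simp only [Category.assoc]
  rw [reassoc_of% h3, ← h4]
  congr 1
  rw [← h2]
  simp only [MonoidalCategory.whiskerLeft_comp, Category.assoc]

lemma unit_nat {M : VMonStruct V C} (FM : FreeModule M) {u v : V} (f : u ⟶ v) :
    f ≫ unitU FM v =
      unitU FM u ≫ (ρ_ _).inv ≫ (_ ◁ FM.Fmap f) ≫ eComp V M.tUnit (FM.F u) (FM.F v) := by
  rw [unitU, unitU, ← FM.adj_nat_left f M.tUnit (FM.F v), ← FM.adj_nat_right]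
  congr 1
  rw [compU_eqU, tU_idU_left, eqU_compU, Category.assoc, eqToHom_trans]

end Aux


/-- The half-braiding morphisms `e_{a, F(v)} : a ⊗ₘ F(v) ⟶ F(v) ⊗ₘ a` (defined
as the mate of `(η_v ⊗ₘ j_a) ≫ (−⊗_A−)`, here `hb`) are natural in `V`-morphisms: for every
`f : u ⟶ v` in `V` one may slide `F(f)` under the half-braiding, i.e.
`(1_a ⊗ₘ F(f)) ≫ e_{a,F(v)} = e_{a,F(u)} ≫ (F(f) ⊗ₘ 1_a)` in the underlying category.
(Consequently `F` lifts to a functor into the Drinfeld center `Z(A^V)`.) -/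
theorem half_braiding_natural
    {V : Type*} [Category V] [MonoidalCategory V] [BraidedCategory V]
    {C : Type*} [EnrichedCategory V C] (M : VMonStruct V C) (FM : FreeModule M)
    {u v : V} (f : u ⟶ v) (a : C) :
    compU (tU M (idU a) (FM.Fmap f)) (hb FM a v) =
      compU (hb FM a u) (tU M (FM.Fmap f) (idU a)) := by
  apply (FM.adj u a (M.tObj (FM.F v) a)).injective
  rw [FM.adj_nat_left f a _ (hb FM a v), FM.adj_nat_right, hb, hb,
    Equiv.apply_symm_apply, Equiv.apply_symm_apply]
  rw [tU, idU]
  have hnat : f ≫ (ρ_ v).inv ≫ (unitU FM v ⊗ₘ eId V a) =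
      (ρ_ u).inv ≫ ((f ≫ unitU FM v) ⊗ₘ eId V a) := by
    simp [MonoidalCategory.tensorHom_def]
  simp only [Category.assoc]
  rw [reassoc_of% hnat, unit_nat FM f, eqToHom_comp_e (M.unit_tensor a)
    ((λ_ (𝟙_ V)).inv ≫ (FM.Fmap f ⊗ₘ eId V a) ≫ M.tHom (FM.F u) a (FM.F v) a)]
  simp only [Category.assoc]
  rw [reassoc_of% (key_interchange M M.tUnit (FM.F u) (FM.F v) a (unitU FM u) (FM.Fmap f))]
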